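/- For 0 < σa, σb, the limit of the symmetric kernel G_{α,z}(σa,σb) = (z/(1−α))·(σa^{α/z} − σb^{α/z})(σa^{(1−α)/z} − σb^{(1−α)/z})/((σa − σb)(σa^{1/z} − σb^{1/z})) as α → 1, z → 1 (along z = α) equals (log σa − log σb)/(σa − σb) when σa ≠ σb. -/

import Mathlib

set_option maxHeartbeats 1000000

open Filter in
theorem G_limit_fisher (σa σb : ℝ) (ha : 0 < σa) (hb : 0 < σb) (hab : σa ≠ σb) :
    Tendsto (fun α : ℝ =>
        (α / (1 - α)) *
          ((σa ^ (α / α) - σb ^ (α / α)) * (σa ^ ((1 - α) / α) - σb ^ ((1 - α) / α)) /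
            ((σa - σb) * (σa ^ (1 / α) - σb ^ (1 / α)))))
      (nhdsWithin 1 {1}ᶜ) (nhds ((Real.log σa - Real.log σb) / (σa - σb))) := by
  have hD : σa - σb ≠ 0 := sub_ne_zero.mpr hab
  -- slope limit : (σa^t - σb^t)/t → log σa - log σb as t → 0, t ≠ 0
  have hderiv : HasDerivAt (fun t : ℝ => σa ^ t - σb ^ t)
      (Real.log σa - Real.log σb) 0 := by
    have h1 := (Real.hasStrictDerivAt_const_rpow ha 0).hasDerivAt
    have h2 := (Real.hasStrictDerivAt_const_rpow hb 0).hasDerivAt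
    simpa [Pi.sub_def] using h1.sub h2
  have hslope : Tendsto (fun t : ℝ => (σa ^ t - σb ^ t) / t)
      (nhdsWithin 0 {0}ᶜ) (nhds (Real.log σa - Real.log σb)) := by
    have := hasDerivAt_iff_tendsto_slope.mp hderiv
    refine this.congr fun t => ?_
    simp [slope_def_field, div_eq_mul_inv, mul_comm]
  -- (1-α)/α tends to 0 within {0}ᶜ as α → 1 within {1}ᶜ
  have hmap : Tendsto (fun α : ℝ => (1 - α) / α) (nhdsWithin 1 {1}ᶜ)
      (nhdsWithin 0 {0}ᶜ) := by
    rw [tendsto_nhdsWithin_iff]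
    constructor
    · have hc : ContinuousAt (fun α : ℝ => (1 - α) / α) 1 :=
        ContinuousAt.div (by fun_prop) continuousAt_id one_ne_zero
      have := hc.tendsto
      simp only [sub_self, zero_div] at this
      exact this.mono_left nhdsWithin_le_nhds
    · have h0 : ∀ᶠ α : ℝ in nhdsWithin 1 {1}ᶜ, α ≠ 0 := by
        filter_upwards [nhdsWithin_le_nhds (eventually_ne_nhds one_ne_zero)] with α hα
        exact hα
      filter_upwards [h0, self_mem_nhdsWithin] with α hα0 hα1
      exact div_ne_zero (sub_ne_zero.mpr fun h => hα1 h.symm) hα0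
  have hN : Tendsto (fun α : ℝ =>
      (σa ^ ((1 - α) / α) - σb ^ ((1 - α) / α)) / ((1 - α) / α))
      (nhdsWithin 1 {1}ᶜ) (nhds (Real.log σa - Real.log σb)) := by
    exact hslope.comp hmap
  -- denominator tends to σa - σb
  have hE : Tendsto (fun α : ℝ => σa ^ (1 / α) - σb ^ (1 / α))
      (nhdsWithin 1 {1}ᶜ) (nhds (σa - σb)) := by
    have hinv : ContinuousAt (fun α : ℝ => 1 / α) 1 :=
      ContinuousAt.div continuousAt_const continuousAt_id one_ne_zero
    have hca : ContinuousAt (fun α : ℝ => σa ^ (1 / α)) 1 :=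
      (Real.continuousAt_const_rpow ha.ne').comp hinv
    have hcb : ContinuousAt (fun α : ℝ => σb ^ (1 / α)) 1 :=
      (Real.continuousAt_const_rpow hb.ne').comp hinv
    have := (hca.sub hcb).tendsto
    simp only [Pi.sub_apply, one_div_one, Real.rpow_one] at this
    exact this.mono_left nhdsWithin_le_nhds
  have hlim : Tendsto (fun α : ℝ =>
      ((σa ^ ((1 - α) / α) - σb ^ ((1 - α) / α)) / ((1 - α) / α)) /
        (σa ^ (1 / α) - σb ^ (1 / α)))
      (nhdsWithin 1 {1}ᶜ) (nhds ((Real.log σa - Real.log σb) / (σa - σb))) :=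
    hN.div hE hD
  refine hlim.congr' ?_
  have h0 : ∀ᶠ α : ℝ in nhdsWithin 1 {1}ᶜ, α ≠ 0 := by
    filter_upwards [nhdsWithin_le_nhds (eventually_ne_nhds one_ne_zero)] with α hα
    exact hα
  filter_upwards [h0, self_mem_nhdsWithin] with α hα0 hα1
  have hα1' : (1 : ℝ) - α ≠ 0 := sub_ne_zero.mpr fun h => hα1 h.symm
  have hαα : α / α = 1 := div_self hα0
  rw [hαα, Real.rpow_one, Real.rpow_one]
  set N := σa ^ ((1 - α) / α) - σb ^ ((1 - α) / α) with hNdef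
  set E := σa ^ (1 / α) - σb ^ (1 / α) with hEdef
  rw [mul_div_mul_left _ _ hD, div_div_eq_mul_div]
  ring
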